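/- Define Υ(θ) = 120·∫₁^θ t²(t−1)/(1+t²) dt. Then for all θ ∉ (−0.1, 0.1), 40·(θ − 1)·Υ'(θ) ≥ Υ(θ), where Υ'(θ) = 120·θ²(θ−1)/(1+θ²). -/

import Mathlib

noncomputable def Ups (θ : ℝ) : ℝ :=
  120 * ∫ t in (1:ℝ)..θ, t^2 * (t - 1) / (1 + t^2)

open intervalIntegral MeasureTheory

private lemma f_cont : Continuous (fun t : ℝ => t^2 * (t - 1) / (1 + t^2)) := by
  apply Continuous.div (by continuity) (by continuity)
  intro t; positivity

private lemma Ups_deriv (θ : ℝ) :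
    deriv Ups θ = 120 * (θ^2 * (θ - 1) / (1 + θ^2)) := by
  have h : HasDerivAt (fun u => ∫ t in (1:ℝ)..u, t^2 * (t - 1) / (1 + t^2))
      (θ^2 * (θ - 1) / (1 + θ^2)) θ :=
    integral_hasDerivAt_right (f_cont.intervalIntegrable _ _)
      (f_cont.stronglyMeasurableAtFilter _ _) f_cont.continuousAt
  exact (h.const_mul (120:ℝ)).deriv

private lemma int_upper {θ : ℝ} (hθ : 1 ≤ θ) :
    (∫ t in (1:ℝ)..θ, t^2 * (t - 1) / (1 + t^2)) ≤ (θ - 1)^2 / 2 := by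
  have h1 : (∫ t in (1:ℝ)..θ, t^2 * (t - 1) / (1 + t^2)) ≤ ∫ t in (1:ℝ)..θ, (t - 1) := by
    apply integral_mono_on hθ (f_cont.intervalIntegrable _ _)
      ((continuous_id'.sub continuous_const).intervalIntegrable _ _)
    intro t ht
    rw [div_le_iff₀ (by positivity)]
    simp only [Pi.sub_apply]
    nlinarith [ht.1, sq_nonneg t]
  have h2 : (∫ t in (1:ℝ)..θ, (t - 1)) = (θ - 1)^2 / 2 := by
    rw [intervalIntegral.integral_sub (continuous_id'.intervalIntegrable _ _)
      intervalIntegrable_const, integral_id, intervalIntegral.integral_const]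
    simp; ring
  linarith

private lemma int_upper_lin {θ : ℝ} (hθ : θ ≤ 1) :
    (∫ t in (1:ℝ)..θ, t^2 * (t - 1) / (1 + t^2)) ≤ (1 - θ)^2 / 2 := by
  rw [intervalIntegral.integral_symm]
  have h1 : (∫ t in θ..(1:ℝ), (t - 1)) ≤ ∫ t in θ..(1:ℝ), t^2 * (t - 1) / (1 + t^2) := by
    apply integral_mono_on hθ ((continuous_id'.sub continuous_const).intervalIntegrable _ _)
      (f_cont.intervalIntegrable _ _)
    intro t ht
    rw [le_div_iff₀ (by positivity)]
    simp only [Pi.sub_apply]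
    nlinarith [ht.2, sq_nonneg t]
  have h2 : (∫ t in θ..(1:ℝ), (t - 1)) = -((1 - θ)^2 / 2) := by
    rw [intervalIntegral.integral_sub (continuous_id'.intervalIntegrable _ _)
      intervalIntegrable_const, integral_id, intervalIntegral.integral_const]
    simp; ring
  linarith

private lemma int_upper_cub {θ : ℝ} (hθ : θ ≤ 1) :
    (∫ t in (1:ℝ)..θ, t^2 * (t - 1) / (1 + t^2)) ≤ 1/12 + θ^4/4 - θ^3/3 := by
  rw [intervalIntegral.integral_symm]
  have h1 : (∫ t in θ..(1:ℝ), (t^3 - t^2)) ≤ ∫ t in θ..(1:ℝ), t^2 * (t - 1) / (1 + t^2) := by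
    apply integral_mono_on hθ
      (((continuous_pow 3).sub (continuous_pow 2)).intervalIntegrable _ _)
      (f_cont.intervalIntegrable _ _)
    intro t ht
    rw [le_div_iff₀ (by positivity)]
    simp only [Pi.sub_apply]
    nlinarith [ht.2, sq_nonneg t, sq_nonneg (t^2)]
  have h2 : (∫ t in θ..(1:ℝ), (t^3 - t^2)) = -(1/12 + θ^4/4 - θ^3/3) := by
    rw [intervalIntegral.integral_sub ((continuous_pow 3).intervalIntegrable _ _)
      ((continuous_pow 2).intervalIntegrable _ _), integral_pow, integral_pow]
    norm_num; ring
  linarith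

theorem Ups_quasar_inequality :
    ∀ θ : ℝ, θ ∉ Set.Ioo (-0.1 : ℝ) 0.1 →
      40 * (θ - 1) * deriv Ups θ ≥ Ups θ := by
  intro θ hθ
  rw [Ups_deriv]
  have hD : (0:ℝ) < 1 + θ^2 := by positivity
  have key : 40 * (θ - 1) * (120 * (θ^2 * (θ - 1) / (1 + θ^2)))
      = 4800 * (θ^2 * (θ - 1)^2) / (1 + θ^2) := by ring
  rw [key, ge_iff_le, Ups, le_div_iff₀ hD]
  rcases le_or_gt 1 θ with h1 | h1
  · have hI := int_upper h1
    nlinarith [mul_le_mul_of_nonneg_right hI hD.le, sq_nonneg (θ - 1), sq_nonneg (θ*(θ-1))]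
  · rcases le_or_gt θ (-1) with h2 | h2
    · have hI := int_upper_lin h1.le
      nlinarith [mul_le_mul_of_nonneg_right hI hD.le, sq_nonneg (θ - 1), sq_nonneg (θ*(θ-1))]
    · have hsq : (1:ℝ)/100 ≤ θ^2 := by
        simp only [Set.mem_Ioo, not_and_or, not_lt] at hθ
        rcases hθ with h | h <;> nlinarith
      have hI := int_upper_cub h1.le
      nlinarith [mul_le_mul_of_nonneg_right hI hD.le, sq_nonneg (θ - 1),
        sq_nonneg (θ*(θ-1)), mul_nonneg (mul_nonneg (sub_nonneg.2 hsq) (sq_nonneg (θ-1))) hD.le,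
        mul_nonneg (sub_nonneg.2 h2.le) (sub_nonneg.2 h1.le), hsq]
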